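/- Let k be a natural number, G = (V, E) a finite graph, and B ⊆ V. Suppose the induced subgraph G[B] is k-colorable (admits a proper vertex coloring with k colors), and for every non-empty subset A ⊆ V \ B it holds that 2·|E[A]| + |E[A,B]| < k·|A|, where E[A] is the set of edges with both endpoints in A and E[A,B] is the set of edges with one endpoint in A and one in B. Then G is k-colorable. -/

import Mathlib

open Finset

/-- Number of edges of `G` with both endpoints in `A`. -/
def edgesWithin {V : Type*} [Fintype V] [DecidableEq V] (G : SimpleGraph V)
    [DecidableRel G.Adj] (A : Finset V) : ℕ :=
  (G.edgeFinset.filter fun e => ∀ v ∈ e, v ∈ A).card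

/-- Number of edges of `G` with one endpoint in `A` and the other in `B`. -/
def edgesBetween {V : Type*} [Fintype V] [DecidableEq V] (G : SimpleGraph V)
    [DecidableRel G.Adj] (A B : Finset V) : ℕ :=
  (G.edgeFinset.filter fun e => ∃ a ∈ A, ∃ b ∈ B, e = s(a, b)).card

/-- The graph of edges of `G` lying within `A`. -/
def withinGraph {V : Type*} [Fintype V] [DecidableEq V] (G : SimpleGraph V)
    [DecidableRel G.Adj] (A : Finset V) : SimpleGraph V where
  Adj x y := G.Adj x y ∧ x ∈ A ∧ y ∈ A
  symm := ⟨fun x y ⟨hadj, hx, hy⟩ => ⟨hadj.symm, hy, hx⟩⟩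
  loopless := ⟨fun x ⟨hadj, _, _⟩ => G.loopless.irrefl x hadj⟩

instance {V : Type*} [Fintype V] [DecidableEq V] (G : SimpleGraph V)
    [DecidableRel G.Adj] (A : Finset V) : DecidableRel (withinGraph G A).Adj :=
  fun x y => decidable_of_iff (G.Adj x y ∧ x ∈ A ∧ y ∈ A) Iff.rfl

lemma withinGraph_edgeFinset {V : Type*} [Fintype V] [DecidableEq V] (G : SimpleGraph V)
    [DecidableRel G.Adj] (A : Finset V) :
    (withinGraph G A).edgeFinset = G.edgeFinset.filter fun e => ∀ v ∈ e, v ∈ A := by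
  ext e
  induction e with
  | _ x y =>
    rw [SimpleGraph.mem_edgeFinset]
    simp [SimpleGraph.mem_edgeFinset, withinGraph, Sym2.mem_iff]

lemma two_mul_edgesWithin {V : Type*} [Fintype V] [DecidableEq V] (G : SimpleGraph V)
    [DecidableRel G.Adj] (A : Finset V) :
    2 * edgesWithin G A = ∑ v ∈ A, (A.filter (G.Adj v)).card := by
  have h1 := (withinGraph G A).sum_degrees_eq_twice_card_edges
  have h2 : ∀ v ∈ A, (withinGraph G A).degree v = (A.filter (G.Adj v)).card := by
    intro v hv
    rw [← SimpleGraph.card_neighborFinset_eq_degree]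
    congr 1
    ext u
    rw [SimpleGraph.mem_neighborFinset]
    simp [withinGraph, hv, and_comm]
  have h3 : ∀ v ∈ (univ : Finset V), v ∉ A → (withinGraph G A).degree v = 0 := by
    intro v _ hv
    rw [← SimpleGraph.card_neighborFinset_eq_degree, Finset.card_eq_zero]
    ext u
    rw [SimpleGraph.mem_neighborFinset]
    simp [withinGraph, hv]
  rw [edgesWithin, ← withinGraph_edgeFinset, ← h1,
    ← Finset.sum_subset (Finset.subset_univ A) h3]
  exact Finset.sum_congr rfl h2

lemma edgesBetween_eq_sum {V : Type*} [Fintype V] [DecidableEq V] (G : SimpleGraph V)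
    [DecidableRel G.Adj] (A B : Finset V) (hd : Disjoint A B) :
    edgesBetween G A B = ∑ v ∈ A, (B.filter (G.Adj v)).card := by
  rw [← Finset.card_sigma]
  apply (Finset.card_bij (fun p _ => s(p.1, p.2)) ?_ ?_ ?_).symm
  · rintro ⟨a, b⟩ hp
    simp only [Finset.mem_sigma, Finset.mem_filter] at hp
    obtain ⟨ha, hb, hadj⟩ := hp
    simp only [Finset.mem_filter, SimpleGraph.mem_edgeFinset, SimpleGraph.mem_edgeSet]
    exact ⟨hadj, a, ha, b, hb, rfl⟩
  · rintro ⟨a, b⟩ hp ⟨a', b'⟩ hp' heq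
    simp only [Finset.mem_sigma, Finset.mem_filter] at hp hp'
    obtain ⟨ha, hb, -⟩ := hp
    obtain ⟨ha', hb', -⟩ := hp'
    rw [Sym2.eq_iff] at heq
    rcases heq with ⟨rfl, rfl⟩ | ⟨rfl, rfl⟩
    · rfl
    · exact absurd hb' (Finset.disjoint_left.mp hd ha)
  · intro e he
    simp only [Finset.mem_filter, SimpleGraph.mem_edgeFinset] at he
    obtain ⟨hadj, a, ha, b, hb, rfl⟩ := he
    refine ⟨⟨a, b⟩, ?_, rfl⟩
    simp only [Finset.mem_sigma, Finset.mem_filter]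
    exact ⟨ha, hb, (SimpleGraph.mem_edgeSet G).mp hadj⟩

/-- Extend a coloring by one vertex with fewer than `k` neighbors. -/
lemma colorable_insert {V : Type*} [Fintype V] [DecidableEq V] (G : SimpleGraph V)
    [DecidableRel G.Adj] (k : ℕ) (s : Finset V) (v : V) (hv : v ∉ s)
    (hd : (s.filter (G.Adj v)).card < k)
    (hc : (G.induce (s : Set V)).Colorable k) :
    (G.induce ((insert v s : Finset V) : Set V)).Colorable k := by
  obtain ⟨C⟩ := hc
  set used : Finset (Fin k) :=
    (s.filter (G.Adj v)).attach.image
      (fun u => C ⟨u.1, by simpa using (Finset.mem_filter.mp u.2).1⟩) with hused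
  have hcard : used.card < Fintype.card (Fin k) := by
    calc used.card ≤ (s.filter (G.Adj v)).attach.card := Finset.card_image_le
    _ = (s.filter (G.Adj v)).card := Finset.card_attach
    _ < k := hd
    _ = Fintype.card (Fin k) := (Fintype.card_fin k).symm
  have hne : usedᶜ.Nonempty := by
    rw [← Finset.card_pos, Finset.card_compl]
    omega
  obtain ⟨c₀, hc₀⟩ := hne
  rw [Finset.mem_compl] at hc₀
  refine ⟨SimpleGraph.Coloring.mk
    (fun x => if h : (x : V) ∈ s then C ⟨x, h⟩ else c₀) ?_⟩
  rintro ⟨a, haM⟩ ⟨b, hbM⟩ hab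
  have hab' : G.Adj a b := hab
  have haM' : a = v ∨ a ∈ s := by simpa using haM
  have hbM' : b = v ∨ b ∈ s := by simpa using hbM
  dsimp only
  split_ifs with h1 h2 h2
  · intro heq
    exact C.valid (show (G.induce (s : Set V)).Adj ⟨a, h1⟩ ⟨b, h2⟩ from hab') heq
  · have hbv : b = v := hbM'.resolve_right h2
    subst hbv
    intro heq
    apply hc₀
    rw [hused, ← heq]
    refine Finset.mem_image.mpr ⟨⟨a, ?_⟩, Finset.mem_attach _ _, rfl⟩
    exact Finset.mem_filter.mpr ⟨h1, hab'.symm⟩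
  · have hav : a = v := haM'.resolve_right h1
    subst hav
    intro heq
    apply hc₀
    rw [hused, heq]
    refine Finset.mem_image.mpr ⟨⟨b, ?_⟩, Finset.mem_attach _ _, rfl⟩
    exact Finset.mem_filter.mpr ⟨h2, hab'⟩
  · have hav : a = v := haM'.resolve_right h1
    have hbv : b = v := hbM'.resolve_right h2
    rw [hav, hbv] at hab'
    exact absurd hab' (G.loopless.irrefl v)

theorem stmt0 {V : Type*} [Fintype V] [DecidableEq V] (G : SimpleGraph V) [DecidableRel G.Adj]
    (k : ℕ) (B : Finset V)
    (hB : (G.induce (B : Set V)).Colorable k)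
    (h : ∀ A : Finset V, A ⊆ Bᶜ → A.Nonempty →
      2 * edgesWithin G A + edgesBetween G A B < k * A.card) :
    G.Colorable k := by
  have key : ∀ (n : ℕ) (S : Finset V), S.card ≤ n → S ⊆ Bᶜ →
      (G.induce ((B ∪ S : Finset V) : Set V)).Colorable k := by
    intro n
    induction n with
    | zero =>
      intro S hcard _
      rw [Nat.le_zero, Finset.card_eq_zero] at hcard
      subst hcard
      rw [Finset.union_empty]
      exact hB
    | succ m ih =>
      intro S hcard hSB
      rcases S.eq_empty_or_nonempty with rfl | hSne
      · rw [Finset.union_empty]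
        exact hB
      · -- find a good vertex
        have hbound := h S hSB hSne
        have hdisj : Disjoint S B := by
          rw [Finset.disjoint_left]
          intro a ha
          exact Finset.mem_compl.mp (hSB ha)
        have hsum : ∑ v ∈ S, ((S.filter (G.Adj v)).card + (B.filter (G.Adj v)).card)
            < ∑ _v ∈ S, k := by
          rw [Finset.sum_add_distrib, ← two_mul_edgesWithin,
            ← edgesBetween_eq_sum G S B hdisj, Finset.sum_const, smul_eq_mul,
            mul_comm]
          linarith [hbound]
        obtain ⟨v, hvS, hvlt⟩ := Finset.exists_lt_of_sum_lt hsum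
        have hvB : v ∉ B := Finset.disjoint_left.mp hdisj hvS
        -- degree bound into B ∪ S.erase v
        have hdeg : (((B ∪ S.erase v)).filter (G.Adj v)).card < k := by
          calc ((B ∪ S.erase v).filter (G.Adj v)).card
              = (B.filter (G.Adj v) ∪ (S.erase v).filter (G.Adj v)).card := by
                rw [Finset.filter_union]
            _ ≤ (B.filter (G.Adj v)).card + ((S.erase v).filter (G.Adj v)).card :=
                Finset.card_union_le _ _
            _ ≤ (B.filter (G.Adj v)).card + (S.filter (G.Adj v)).card :=
                Nat.add_le_add_left (Finset.card_le_card
                  (Finset.filter_subset_filter _ (Finset.erase_subset _ _))) _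
            _ < k := by omega
        have hvnot : v ∉ B ∪ S.erase v := by
          simp [hvB]
        have hcol : (G.induce ((B ∪ S.erase v : Finset V) : Set V)).Colorable k := by
          apply ih
          · have := Finset.card_erase_of_mem hvS
            omega
          · exact (Finset.erase_subset _ _).trans hSB
        have := colorable_insert G k (B ∪ S.erase v) v hvnot hdeg hcol
        have heq : insert v (B ∪ S.erase v) = B ∪ S := by
          rw [← Finset.union_insert, Finset.insert_erase hvS]
        rwa [heq] at this
  have hfin := key (Bᶜ.card) Bᶜ le_rfl (Finset.Subset.refl _)
  rw [Finset.union_compl] at hfin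
  rw [Finset.coe_univ] at hfin
  have : (G.induce (Set.univ : Set V)).Colorable k := hfin
  obtain ⟨C⟩ := this
  exact ⟨C.comp (SimpleGraph.induceUnivIso G).symm.toHom⟩
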